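/- With the data of the multiply warped example (k ≥ 2; positive integers r₁,…,r_k; n, C, L, ε, I; functions h₁,…,h_k, f, λ as defined), for every s ∈ I one has f''(s) − Σ_{j=1}^{k} r_j·h_j''(s)/h_j(s) = λ(s). -/

import Mathlib

private lemma stmt13_final_alg (L m C T c : ℝ) (hm : m ≠ 0) (hc : c ≠ 0)
    (hT2 : T ^ 2 * c ^ 2 = 1 - c ^ 2) :
    L * (L / c ^ 2) - ((L ^ 2 + C ^ 2) / m - 2 * (C / m + -(1/m) * L * T) * C
      + ((C / m + -(1/m) * L * T) ^ 2 - -(1/m) * L * (L / c ^ 2)) * m) = -L ^ 2 / (m * c ^ 2) := by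
  field_simp
  linear_combination (-(L ^ 2)) * hT2

theorem stmt_13 (k : ℕ) (hk : 2 ≤ k) (r : ℕ → ℕ)
    (hr : ∀ j ∈ Finset.Icc 1 k, 0 < r j)
    (n : ℕ) (hn : n = (∑ j ∈ Finset.Icc 1 k, r j) + 1)
    (C L ε : ℝ) (hC : C = ∑ j ∈ Finset.Icc 1 k, (r j : ℝ) * (j : ℝ))
    (hL2 : 0 < ((n : ℝ) - 1) * (∑ j ∈ Finset.Icc 1 k, (r j : ℝ) * (j : ℝ) ^ 2) - C ^ 2)
    (hL : L = Real.sqrt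
      (((n : ℝ) - 1) * (∑ j ∈ Finset.Icc 1 k, (r j : ℝ) * (j : ℝ) ^ 2) - C ^ 2))
    (hε : ε = Real.pi / (2 * L))
    (h : ℕ → ℝ → ℝ) (f lam : ℝ → ℝ)
    (hh : ∀ i ∈ Finset.Icc 1 k, ∀ s ∈ Set.Ioo (-ε) ε,
      h i s = Real.exp (((i : ℝ) - C / ((n : ℝ) - 1)) * s)
        * Real.cos (L * s) ^ (-(1 / ((n : ℝ) - 1))))
    (hf : ∀ s ∈ Set.Ioo (-ε) ε, f s = -Real.log (Real.cos (L * s)))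
    (hlam : ∀ s ∈ Set.Ioo (-ε) ε,
      lam s = -L ^ 2 / (((n : ℝ) - 1) * Real.cos (L * s) ^ 2)) :
    ∀ s ∈ Set.Ioo (-ε) ε,
      deriv (deriv f) s
        - ∑ j ∈ Finset.Icc 1 k, (r j : ℝ) * deriv (deriv (h j)) s / h j s
        = lam s := by
  set m : ℝ := (n : ℝ) - 1 with hm_def
  set p : ℝ := -(1 / m) with hp_def
  -- basic facts
  have h1k : 1 ∈ Finset.Icc 1 k := Finset.mem_Icc.mpr ⟨le_refl 1, le_trans one_le_two hk⟩
  have hsum1 : 1 ≤ ∑ j ∈ Finset.Icc 1 k, r j :=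
    le_trans (hr 1 h1k) (Finset.single_le_sum (fun j _ => Nat.zero_le _) h1k)
  have hmR : m = ∑ j ∈ Finset.Icc 1 k, (r j : ℝ) := by
    rw [hm_def, hn]; push_cast; ring
  have hm : 0 < m := by
    rw [hm_def, hn]; push_cast
    have h1 : (1:ℝ) ≤ ∑ j ∈ Finset.Icc 1 k, ((r j : ℕ) : ℝ) := by exact_mod_cast hsum1
    linarith
  have hLpos : 0 < L := by rw [hL]; exact Real.sqrt_pos.mpr hL2
  have hLsq : L ^ 2 = m * (∑ j ∈ Finset.Icc 1 k, (r j : ℝ) * (j : ℝ) ^ 2) - C ^ 2 := by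
    rw [hL]; exact Real.sq_sqrt hL2.le
  have hεpos : 0 < ε := by
    rw [hε]; positivity
  -- cos positivity on the interval
  have hcos_pos : ∀ u ∈ Set.Ioo (-ε) ε, 0 < Real.cos (L * u) := by
    intro u hu
    apply Real.cos_pos_of_mem_Ioo
    constructor
    · have := mul_lt_mul_of_pos_left hu.1 hLpos
      rw [hε] at this
      calc -(Real.pi/2) = L * (-(Real.pi/(2*L))) := by field_simp
        _ < L * u := this
    · have := mul_lt_mul_of_pos_left hu.2 hLpos
      rw [hε] at this
      calc L * u < L * (Real.pi/(2*L)) := this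
        _ = Real.pi/2 := by field_simp
  -- elementary derivative facts
  have hlin : ∀ (c : ℝ) (u : ℝ), HasDerivAt (fun v => c * v) c u := by
    intro c u; simpa using (hasDerivAt_id u).const_mul c
  have hcosD : ∀ u : ℝ, HasDerivAt (fun v => Real.cos (L * v)) (-Real.sin (L * u) * L) u :=
    fun u => (hlin L u).cos
  have hsinD : ∀ u : ℝ, HasDerivAt (fun v => Real.sin (L * v)) (Real.cos (L * u) * L) u :=
    fun u => (hlin L u).sin
  set t : ℝ → ℝ := fun u => Real.sin (L * u) / Real.cos (L * u) with ht_def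
  have htD : ∀ u ∈ Set.Ioo (-ε) ε, HasDerivAt t (L / Real.cos (L * u) ^ 2) u := by
    intro u hu
    have hc := hcos_pos u hu
    have := (hsinD u).div (hcosD u) hc.ne'
    convert this using 1
    case e'_4 => rfl
    case e'_5 => rfl
    case e'_8 => rfl
    field_simp
    linear_combination (-1 : ℝ) * Real.sin_sq_add_cos_sq (L*u)
  intro s hs
  have hc := hcos_pos s hs
  have hmem : Set.Ioo (-ε) ε ∈ nhds s := Ioo_mem_nhds hs.1 hs.2
  -- f part
  have hF1 : ∀ u ∈ Set.Ioo (-ε) ε,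
      HasDerivAt (fun v => -Real.log (Real.cos (L * v))) (L * t u) u := by
    intro u hu
    have hc := hcos_pos u hu
    have := ((hcosD u).log hc.ne').neg
    convert this using 1
    case e'_4 => rfl
    case e'_5 => rfl
    case e'_8 => rfl
    rw [ht_def]; field_simp
  have hderivf : deriv f =ᶠ[nhds s] (fun u => L * t u) := by
    filter_upwards [hmem] with u hu
    have hfe : f =ᶠ[nhds u] (fun v => -Real.log (Real.cos (L * v))) := by
      filter_upwards [Ioo_mem_nhds hu.1 hu.2] with v hv using hf v hv
    rw [hfe.deriv_eq]
    exact (hF1 u hu).deriv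
  have hf'' : deriv (deriv f) s = L * (L / Real.cos (L * s) ^ 2) := by
    rw [hderivf.deriv_eq]
    exact (((htD s hs).const_mul L)).deriv
  -- h part
  have hkey : ∀ j ∈ Finset.Icc 1 k,
      (r j : ℝ) * deriv (deriv (h j)) s / h j s
        = (r j : ℝ) * ((((j : ℝ) - C / m) - p * L * t s) ^ 2 - p * L * (L / Real.cos (L * s) ^ 2)) := by
    intro j hj
    set a : ℝ := (j : ℝ) - C / m with ha_def
    set H : ℝ → ℝ := fun u => Real.exp (a * u) * Real.cos (L * u) ^ p with hH_def
    have hHpos : ∀ u ∈ Set.Ioo (-ε) ε, 0 < H u := by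
      intro u hu
      exact mul_pos (Real.exp_pos _) (Real.rpow_pos_of_pos (hcos_pos u hu) _)
    have hHD : ∀ u ∈ Set.Ioo (-ε) ε, HasDerivAt H (H u * (a - p * L * t u)) u := by
      intro u hu
      have hc := hcos_pos u hu
      have hexp : HasDerivAt (fun v => Real.exp (a * v)) (Real.exp (a * u) * a) u :=
        (hlin a u).exp
      have hrpow := (hcosD u).rpow_const (p := p) (Or.inl hc.ne')
      have := hexp.mul hrpow
      convert this using 1
      case e'_4 => rfl
      case e'_5 => rfl
      case e'_8 => rfl
      rw [hH_def, ht_def, Real.rpow_sub_one hc.ne']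
      field_simp
      ring
    have hHD2 : HasDerivAt (fun u => H u * (a - p * L * t u))
        (H s * (a - p * L * t s) * (a - p * L * t s)
          + H s * (-(p * L * (L / Real.cos (L * s) ^ 2)))) s := by
      have h2 : HasDerivAt (fun u => a - p * L * t u) (-(p * L * (L / Real.cos (L * s) ^ 2))) s := by
        simpa using (((htD s hs).const_mul (p * L))).const_sub a
      exact (hHD s hs).mul h2
    have hderivH : deriv (h j) =ᶠ[nhds s] (fun u => H u * (a - p * L * t u)) := by
      filter_upwards [hmem] with u hu
      have hje : h j =ᶠ[nhds u] H := by
        filter_upwards [Ioo_mem_nhds hu.1 hu.2] with v hv using hh j hj v hv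
      rw [hje.deriv_eq]
      exact (hHD u hu).deriv
    have hh'' : deriv (deriv (h j)) s
        = H s * (a - p * L * t s) * (a - p * L * t s)
          + H s * (-(p * L * (L / Real.cos (L * s) ^ 2))) := by
      rw [hderivH.deriv_eq]
      exact hHD2.deriv
    have hhs : h j s = H s := hh j hj s hs
    rw [hh'', hhs]
    have hHne : H s ≠ 0 := (hHpos s hs).ne'
    field_simp
    ring
  -- final algebra
  have hsumeq : ∑ j ∈ Finset.Icc 1 k, (r j : ℝ) * deriv (deriv (h j)) s / h j s
      = ∑ j ∈ Finset.Icc 1 k,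
          (r j : ℝ) * ((((j : ℝ) - C / m) - p * L * t s) ^ 2 - p * L * (L / Real.cos (L * s) ^ 2)) :=
    Finset.sum_congr rfl hkey
  have hexpand : ∀ j ∈ Finset.Icc 1 k,
      (r j : ℝ) * ((((j : ℝ) - C / m) - p * L * t s) ^ 2 - p * L * (L / Real.cos (L * s) ^ 2))
        = (r j : ℝ) * (j : ℝ) ^ 2
          - (2 * (C / m + p * L * t s)) * ((r j : ℝ) * (j : ℝ))
          + ((C / m + p * L * t s) ^ 2 - p * L * (L / Real.cos (L * s) ^ 2)) * (r j : ℝ) := by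
    intro j _; ring
  have hsum2 : ∑ j ∈ Finset.Icc 1 k,
      (r j : ℝ) * ((((j : ℝ) - C / m) - p * L * t s) ^ 2 - p * L * (L / Real.cos (L * s) ^ 2))
      = (∑ j ∈ Finset.Icc 1 k, (r j : ℝ) * (j : ℝ) ^ 2)
        - (2 * (C / m + p * L * t s)) * C
        + ((C / m + p * L * t s) ^ 2 - p * L * (L / Real.cos (L * s) ^ 2)) * m := by
    rw [Finset.sum_congr rfl hexpand, Finset.sum_add_distrib, Finset.sum_sub_distrib,
      ← Finset.mul_sum, ← Finset.mul_sum, ← hC, ← hmR]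
  have hS2 : (∑ j ∈ Finset.Icc 1 k, (r j : ℝ) * (j : ℝ) ^ 2) = (L ^ 2 + C ^ 2) / m := by
    field_simp
    linarith [hLsq]
  have hT2 : (t s) ^ 2 * Real.cos (L * s) ^ 2 = 1 - Real.cos (L * s) ^ 2 := by
    rw [ht_def]
    field_simp
    linear_combination Real.sin_sq_add_cos_sq (L * s)
  rw [hf'', hsumeq, hsum2, hS2, hlam s hs, hp_def]
  exact stmt13_final_alg L m C (t s) (Real.cos (L * s)) hm.ne' hc.ne' hT2
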